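/- Let A be a rigid symmetric monoidal category with End(1) a field of characteristic 0, L an invertible object, and M an object with χ(M) ≠ 0 admitting an isomorphism u : M ≅ L ⊗ M^∨. Then L is a direct summand of M ⊗ M. -/
import Mathlib


open CategoryTheory MonoidalCategory

/-- Lemma 6.5 (l6.1) of "Chow-Lefschetz motives": in a rigid symmetric monoidal category
with `End(𝟙)` a field of characteristic `0`, if `L` is an invertible object and `M` an
object (with dual `N`) with nonzero Euler characteristic admitting an isomorphism
`u : M ≅ L ⊗ M^∨`, then `L` is a direct summand of `M ⊗ M`. -/
theorem invertible_direct_summand_of_polarisation {C : Type*} [Category C]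
    [MonoidalCategory C] [SymmetricCategory C] [Preadditive C]
    [CharZero (End (𝟙_ C))]
    (hfield : ∀ x : End (𝟙_ C), x ≠ 0 → IsUnit x)
    (M N L L' : C) [ExactPairing M N]
    (hL : L ⊗ L' ≅ 𝟙_ C) (hL' : L' ⊗ L ≅ 𝟙_ C)
    (u : M ≅ L ⊗ N)
    (hχ : η_ M N ≫ (β_ M N).hom ≫ ε_ M N ≠ 0) :
    ∃ (s : L ⟶ M ⊗ M) (r : M ⊗ M ⟶ L), s ≫ r = 𝟙 L := by
  set χ : End (𝟙_ C) := η_ M N ≫ (β_ M N).hom ≫ ε_ M N with hχdef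
  obtain ⟨v, hv⟩ := hfield χ hχ
  have hvc : v.inv ≫ χ = 𝟙 (𝟙_ C) := by
    have := v.mul_inv
    rw [hv] at this
    simpa [End.mul_def] using this
  refine ⟨(ρ_ L).inv ≫ (L ◁ (v.inv ≫ η_ M N ≫ (β_ M N).hom)) ≫ (α_ L N M).inv ≫ (u.inv ▷ M),
    (u.hom ▷ M) ≫ (α_ L N M).hom ≫ (L ◁ ε_ M N) ≫ (ρ_ L).hom, ?_⟩
  have key : v.inv ≫ η_ M N ≫ (β_ M N).hom ≫ ε_ M N = 𝟙 (𝟙_ C) := by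
    simpa [hχdef] using hvc
  simp only [Category.assoc, Iso.inv_hom_id_assoc, ← comp_whiskerRight_assoc, Iso.inv_hom_id,
    id_whiskerRight, Category.id_comp]
  rw [← MonoidalCategory.whiskerLeft_comp_assoc]
  simp only [Category.assoc, key]
  simp
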